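/- arXiv:math/0102068 — 3 statements merged into one kernel-verified Lean document; each statement's English description precedes it below -/
import Mathlib

section
/- Let p be a prime and G a profinite group with a decreasing sequence (G_i)_{i≥0} of open normal subgroups such that G_0 = G, ⋂_{i≥0} G_i = {1}, and [G_{i−1} : G_i] = p for every i ≥ 1. Let a_i ∈ G_{i−1} ∖ G_i for every i ≥ 1. Then for every k ≥ 0 the smallest closed subgroup of G containing {a_i : i > k} is exactly G_k; in particular the elements a_i topologically generate G. -/
/-- PC-generators of a pro-`p` chain: if `(G_i)` is a decreasing chain of open normal
subgroups of a profinite group `G` with `G_0 = G`, trivial intersection and each step of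
index `p`, and `a_i ∈ G_{i-1} \ G_i`, then the smallest closed subgroup containing
`{a_i : i > k}` is `G_k`; in particular the `a_i` topologically generate `G`. -/
theorem pc_generators_tail_topologically_generate
    (p : ℕ) (hp : p.Prime) (G : Type*) [Group G] [TopologicalSpace G]
    [IsTopologicalGroup G] [CompactSpace G] [T2Space G] [TotallyDisconnectedSpace G]
    (C : ℕ → Subgroup G)
    (hdec : ∀ i, C (i + 1) ≤ C i)
    (hopen : ∀ i, IsOpen (C i : Set G))
    (hnormal : ∀ i, (C i).Normal)
    (h0 : C 0 = ⊤)
    (hinter : ⨅ i, C i = ⊥)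
    (hindex : ∀ i, 1 ≤ i → (C i).relIndex (C (i - 1)) = p)
    (a : ℕ → G)
    (hmem : ∀ i, 1 ≤ i → a i ∈ C (i - 1))
    (hnotmem : ∀ i, 1 ≤ i → a i ∉ C i) :
    ∀ k : ℕ, (Subgroup.closure {x : G | ∃ i, k < i ∧ x = a i}).topologicalClosure = C k := by
  have hanti : Antitone C := antitone_nat_of_succ_le hdec
  -- each step: C i ≤ ⟨a (i+1)⟩ ⊔ C (i+1)
  have hstep : ∀ i : ℕ, C i ≤ Subgroup.closure {a (i + 1)} ⊔ C (i + 1) := by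
    intro i
    set K := Subgroup.closure {a (i + 1)} ⊔ C (i + 1) with hK
    have hKle : K ≤ C i := by
      apply sup_le
      · rw [Subgroup.closure_le]
        intro x hx
        rcases hx with rfl
        simpa using hmem (i + 1) (by omega)
      · exact hdec i
    have hle1 : C (i + 1) ≤ K := le_sup_right
    have hmul := Subgroup.relIndex_mul_relIndex (C (i + 1)) K (C i) hle1 hKle
    have hrel : (C (i + 1)).relIndex (C i) = p := by
      simpa using hindex (i + 1) (by omega)
    rw [hrel] at hmul
    have hne1 : (C (i + 1)).relIndex K ≠ 1 := by
      intro h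
      rw [Subgroup.relIndex_eq_one] at h
      exact hnotmem (i + 1) (by omega)
        (h (le_sup_left (α := Subgroup G) (Subgroup.subset_closure rfl)))
    have hx : (C (i + 1)).relIndex K = p := by
      rcases (Nat.Prime.eq_one_or_self_of_dvd hp _ ⟨_, hmul.symm⟩) with h | h
      · exact absurd h hne1
      · exact h
    rw [hx] at hmul
    have : K.relIndex (C i) = 1 :=
      Nat.eq_of_mul_eq_mul_left hp.pos (by rw [hmul, Nat.mul_one])
    exact Subgroup.relIndex_eq_one.mp this
  intro k
  set S := Subgroup.closure {x : G | ∃ i, k < i ∧ x = a i} with hS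
  -- upper bound
  have hCk_closed : IsClosed ((C k : Set G)) := (C k).isClosed_of_isOpen (hopen k)
  have hub : S.topologicalClosure ≤ C k := by
    apply Subgroup.topologicalClosure_minimal _ _ hCk_closed
    rw [hS, Subgroup.closure_le]
    rintro x ⟨i, hi, rfl⟩
    exact hanti (by omega : k ≤ i - 1) (hmem i (by omega))
  -- C k ≤ S ⊔ C (k + n) for all n
  have hlow : ∀ n : ℕ, C k ≤ S ⊔ C (k + n) := by
    intro n
    induction n with
    | zero => simpa using (le_sup_right : C k ≤ S ⊔ C k)
    | succ n ih =>
      refine ih.trans (sup_le le_sup_left ?_)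
      refine (hstep (k + n)).trans (sup_le ?_ le_sup_right)
      have : a (k + n + 1) ∈ S := Subgroup.subset_closure ⟨k + n + 1, by omega, rfl⟩
      refine le_trans ?_ le_sup_left
      rw [Subgroup.closure_le]
      rintro x rfl
      exact this
  -- lower bound
  refine le_antisymm hub ?_
  intro g hg
  have hmemcl : g ∈ closure (S : Set G) := by
    rw [mem_closure_iff]
    intro U hU hgU
    -- V = translate of U to a neighborhood of 1
    set V : Set G := (fun x => g * x) ⁻¹' U with hV
    have hVopen : IsOpen V := hU.preimage (continuous_const.mul continuous_id)
    have h1V : (1 : G) ∈ V := by simpa [hV]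
    -- find N with C N ⊆ V using compactness
    obtain ⟨N, hN⟩ : ∃ N, (C N : Set G) ⊆ V := by
      by_contra hcon
      push_neg at hcon
      set f : ℕ → Set G := fun n => (C n : Set G) ∩ Vᶜ with hf
      have hfc : ∀ n, IsClosed (f n) :=
        fun n => ((C n).isClosed_of_isOpen (hopen n)).inter hVopen.isClosed_compl
      have hinterf : (C 0 : Set G) ∩ ⋂ n, f n = ∅ := by
        apply Set.eq_empty_iff_forall_notMem.mpr
        intro x hx
        have hx2 : x ∈ ⋂ n, (C n : Set G) := by
          apply Set.mem_iInter.mpr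
          intro n
          exact (Set.mem_iInter.mp hx.2 n).1
        have : x ∈ (⨅ i, C i : Subgroup G) := by
          rw [Subgroup.mem_iInf]
          intro n; exact Set.mem_iInter.mp hx2 n
        rw [hinter, Subgroup.mem_bot] at this
        subst this
        exact (Set.mem_iInter.mp hx.2 0).2 h1V
      obtain ⟨u, hu⟩ := (((C 0).isClosed_of_isOpen (hopen 0)).isCompact).elim_finite_subfamily_closed
        f hfc hinterf
      set N := u.sup id with hNdef
      have hfN : f N ⊆ (C 0 : Set G) ∩ ⋂ i ∈ u, f i := by
        intro x hx
        refine ⟨hanti (Nat.zero_le N) hx.1, Set.mem_iInter₂.mpr fun i hi => ?_⟩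
        exact ⟨hanti (Finset.le_sup (f := id) hi) hx.1, hx.2⟩
      have : f N = ∅ := Set.eq_empty_iff_forall_notMem.mpr
        fun x hx => (Set.eq_empty_iff_forall_notMem.mp hu x) (hfN hx)
      obtain ⟨y, hy1, hy2⟩ := Set.not_subset.mp (hcon N)
      exact Set.eq_empty_iff_forall_notMem.mp ‹f N = ∅› y ⟨hy1, hy2⟩
    -- g ∈ S ⊔ C (k + N), decompose
    have hg2 : g ∈ S ⊔ C (k + N) := hlow N hg
    have := hnormal (k + N)
    rw [← SetLike.mem_coe, Subgroup.mul_normal] at hg2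
    obtain ⟨s, hs, c, hc, rfl⟩ := hg2
    refine ⟨s, ?_, hs⟩
    have hcinv : c⁻¹ ∈ C N := hanti (by omega : N ≤ k + N) (inv_mem hc)
    have : s * c * c⁻¹ ∈ U := hN (hcinv)
    simpa using this
  rwa [← Subgroup.topologicalClosure_coe, SetLike.mem_coe] at hmemcl
end

section
/- Let p be an odd prime, R a commutative ring, and σ, τ ring automorphisms of R with στ = τσ and σ^p = τ^p = id. Let λ, μ ∈ R satisfy σ(λ) = λ, τ(μ) = μ, Σ_{i=0}^{p−1} τ^i(λ) = 0 and Σ_{i=0}^{p−1} σ^i(μ) = 0. Define A = Σ_{0 ≤ i < j ≤ p−2} ( τ^i(λ)·σ^j(μ) − τ^j(λ)·σ^i(μ) ). Then (τ∘σ)(A) = A. -/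
open Finset in
private lemma aux_shift_sum {R : Type*} [CommRing R] (a b : ℕ → R) (n : ℕ)
    (ha : ∑ i ∈ range (n + 1), a i = 0) (hb : ∑ i ∈ range (n + 1), b i = 0) :
    ∑ j ∈ range n, ∑ i ∈ range j, (a (i+1) * b (j+1) - a (j+1) * b (i+1)) =
    ∑ j ∈ range n, ∑ i ∈ range j, (a i * b j - a j * b i) := by
  have hrow : ∀ m, ∑ i ∈ range (n + 1), (a i * b m - a m * b i) = 0 := by
    intro m
    rw [Finset.sum_sub_distrib, ← Finset.sum_mul, ← Finset.mul_sum, ha, hb, zero_mul,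
      mul_zero, sub_zero]
  have hcol : ∑ j ∈ range (n + 1), (a 0 * b j - a j * b 0) = 0 := by
    rw [Finset.sum_sub_distrib, ← Finset.mul_sum, ← Finset.sum_mul, ha, hb, zero_mul,
      mul_zero, sub_zero]
  have h1 : ∀ j, ∑ i ∈ range j, (a (i+1) * b (j+1) - a (j+1) * b (i+1)) =
      (∑ i ∈ range (j+1), (a i * b (j+1) - a (j+1) * b i))
        - (a 0 * b (j+1) - a (j+1) * b 0) := by
    intro j
    rw [Finset.sum_range_succ']
    ring
  have h2 : ∑ j ∈ range n, ∑ i ∈ range (j+1), (a i * b (j+1) - a (j+1) * b i) =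
      ∑ j ∈ range n, ∑ i ∈ range j, (a i * b j - a j * b i) := by
    have := Finset.sum_range_succ' (fun j => ∑ i ∈ range j, (a i * b j - a j * b i)) n
    simp only [Finset.range_zero, Finset.sum_empty, add_zero] at this
    rw [← this, Finset.sum_range_succ]
    have hgn : ∑ i ∈ range n, (a i * b n - a n * b i) = 0 := by
      have := Finset.sum_range_succ (fun i => a i * b n - a n * b i) n
      rw [hrow n] at this
      have h0 : a n * b n - a n * b n = 0 := sub_self _
      simp only [h0] at this
      simpa using this.symm
    rw [hgn, add_zero]
  have h3 : ∑ j ∈ range n, (a 0 * b (j+1) - a (j+1) * b 0) = 0 := by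
    have := Finset.sum_range_succ' (fun j => a 0 * b j - a j * b 0) n
    rw [hcol] at this
    have h0 : a 0 * b 0 - a 0 * b 0 = 0 := sub_self _
    simp only [h0, add_zero] at this
    simpa using this.symm
  calc ∑ j ∈ range n, ∑ i ∈ range j, (a (i+1) * b (j+1) - a (j+1) * b (i+1))
      = ∑ j ∈ range n, ((∑ i ∈ range (j+1), (a i * b (j+1) - a (j+1) * b i))
          - (a 0 * b (j+1) - a (j+1) * b 0)) := by
        exact Finset.sum_congr rfl fun j _ => h1 j
    _ = (∑ j ∈ range n, ∑ i ∈ range (j+1), (a i * b (j+1) - a (j+1) * b i))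
          - ∑ j ∈ range n, (a 0 * b (j+1) - a (j+1) * b 0) := Finset.sum_sub_distrib _ _
    _ = ∑ j ∈ range n, ∑ i ∈ range j, (a i * b j - a j * b i) := by
        rw [h2, h3, sub_zero]

open Finset in
/-- Let `p` be an odd prime, `R` a commutative ring, and `σ, τ` commuting ring automorphisms
with `σ^p = τ^p = 1`. If `σ λ = λ`, `τ μ = μ`, and the "traces" `∑ τ^i λ` and `∑ σ^i μ`
vanish, then `A = ∑_{0 ≤ i < j ≤ p-2} (τ^i λ · σ^j μ − τ^j λ · σ^i μ)` is fixed by `τ ∘ σ`. -/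
theorem fixed_element_of_compositum_odd
    (p : ℕ) (hp : p.Prime) (hodd : Odd p) (R : Type*) [CommRing R]
    (σ τ : RingAut R) (hcomm : σ * τ = τ * σ)
    (hσ : σ ^ p = 1) (hτ : τ ^ p = 1)
    (lam mu : R) (hlam : σ lam = lam) (hmu : τ mu = mu)
    (htrlam : ∑ i ∈ range p, (τ ^ i) lam = 0)
    (htrmu : ∑ i ∈ range p, (σ ^ i) mu = 0) :
    (τ * σ) (∑ j ∈ range (p - 1), ∑ i ∈ range j,
        ((τ ^ i) lam * (σ ^ j) mu - (τ ^ j) lam * (σ ^ i) mu)) =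
      ∑ j ∈ range (p - 1), ∑ i ∈ range j,
        ((τ ^ i) lam * (σ ^ j) mu - (τ ^ j) lam * (σ ^ i) mu) := by
  have hc : Commute σ τ := hcomm
  -- a i = τ^i lam is fixed by σ
  have hafix : ∀ i, σ ((τ ^ i) lam) = (τ ^ i) lam := by
    intro i
    have h := (hc.pow_right i)
    calc σ ((τ ^ i) lam) = (σ * τ ^ i) lam := rfl
      _ = (τ ^ i * σ) lam := by rw [h]
      _ = (τ ^ i) (σ lam) := rfl
      _ = (τ ^ i) lam := by rw [hlam]
  have hbfix : ∀ i, τ ((σ ^ i) mu) = (σ ^ i) mu := by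
    intro i
    have h := (hc.symm.pow_right i)
    calc τ ((σ ^ i) mu) = (τ * σ ^ i) mu := rfl
      _ = (σ ^ i * τ) mu := by rw [h]
      _ = (σ ^ i) (τ mu) := rfl
      _ = (σ ^ i) mu := by rw [hmu]
  have hashift : ∀ i, (τ * σ) ((τ ^ i) lam) = (τ ^ (i + 1)) lam := by
    intro i
    show τ (σ ((τ ^ i) lam)) = _
    rw [hafix i, pow_succ']
    rfl
  have hbshift : ∀ i, (τ * σ) ((σ ^ i) mu) = (σ ^ (i + 1)) mu := by
    intro i
    show τ (σ ((σ ^ i) mu)) = _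
    have : σ ((σ ^ i) mu) = (σ ^ (i + 1)) mu := by rw [pow_succ']; rfl
    rw [this, hbfix]
  have hn : p - 1 + 1 = p := Nat.succ_pred_eq_of_pos hp.pos
  rw [map_sum]
  have hterm : ∀ j ∈ range (p - 1), (τ * σ) (∑ i ∈ range j,
      ((τ ^ i) lam * (σ ^ j) mu - (τ ^ j) lam * (σ ^ i) mu)) =
      ∑ i ∈ range j, ((τ ^ (i+1)) lam * (σ ^ (j+1)) mu
        - (τ ^ (j+1)) lam * (σ ^ (i+1)) mu) := by
    intro j _
    rw [map_sum]
    refine Finset.sum_congr rfl fun i _ => ?_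
    rw [map_sub, map_mul, map_mul, hashift, hashift, hbshift, hbshift]
  rw [Finset.sum_congr rfl hterm]
  exact aux_shift_sum (fun i => (τ ^ i) lam) (fun i => (σ ^ i) mu) (p - 1)
    (by rw [hn]; exact htrlam) (by rw [hn]; exact htrmu)
end

section
/- Let G be a C-group with C-tower (a_{n_k})_{k≥1}. Then for every k ≥ 2 the tower element a_{n_{k+1}} lies in γ_k(G) and is nontrivial; in particular every term γ_k(G) of the lower central series of G is nontrivial. -/
/-- The data of a `C`-group (for the prime `p`): an infinite pro-`p` group `G` together with
a strictly decreasing chain of open normal subgroups `G = chain 0 ⊋ chain 1 ⊋ ⋯` with trivial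
intersection, each step of index `p` and `⁅G, chain i⁆ ⊆ chain (i+1)`; PC-generators
`gen i ∈ chain (i-1) \ chain i` (for `i ≥ 1`) which topologically generate `G`; a sequence of
pairwise distinct indices `idx 1, idx 2, …` whose generators form a `C`-tower
(`gen (idx 3) = ⁅gen (idx 1), gen (idx 2)⁆` and `gen (idx (k+1)) = ⁅gen (idx k), gen (idx (k-1))⁆`
for `k ≥ 3`, where `⁅x, y⁆ = x⁻¹y⁻¹xy`); and such that the closed subgroup topologically
generated by the PC-generators not in the `C`-tower has trivial normal core. -/
structure CGroupData (p : ℕ) (G : Type*) [Group G] [TopologicalSpace G] [IsTopologicalGroup G] where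
  chain : ℕ → Subgroup G
  gen : ℕ → G
  idx : ℕ → ℕ
  chain_zero : chain 0 = ⊤
  chain_lt : ∀ i, chain (i + 1) < chain i
  chain_open : ∀ i, IsOpen (chain i : Set G)
  chain_normal : ∀ i, (chain i).Normal
  chain_iInf : ⨅ i, chain i = ⊥
  chain_index : ∀ i, (chain (i + 1)).relIndex (chain i) = p
  chain_comm : ∀ i, ∀ g : G, ∀ h ∈ chain i, g⁻¹ * h⁻¹ * g * h ∈ chain (i + 1)
  gen_mem : ∀ i, 1 ≤ i → gen i ∈ chain (i - 1)
  gen_not_mem : ∀ i, 1 ≤ i → gen i ∉ chain i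
  gen_top : (Subgroup.closure (Set.range fun i : ℕ => gen (i + 1))).topologicalClosure = ⊤
  idx_pos : ∀ k, 1 ≤ k → 1 ≤ idx k
  idx_inj : ∀ k l, 1 ≤ k → 1 ≤ l → idx k = idx l → k = l
  tower₃ : gen (idx 3) = (gen (idx 1))⁻¹ * (gen (idx 2))⁻¹ * gen (idx 1) * gen (idx 2)
  tower : ∀ k, 3 ≤ k →
    gen (idx (k + 1)) =
      (gen (idx k))⁻¹ * (gen (idx (k - 1)))⁻¹ * gen (idx k) * gen (idx (k - 1))
  core_trivial :
    (Subgroup.closure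
        {x : G | ∃ i, 1 ≤ i ∧ (∀ k, 1 ≤ k → idx k ≠ i) ∧ x = gen i}).topologicalClosure.normalCore
      = ⊥

open scoped commutatorElement

/-- In a `C`-group with `C`-tower `(gen (idx k))`, for every `k ≥ 2` the tower element
`gen (idx (k + 1))` lies in `γ_k(G) = lowerCentralSeries G (k - 1)` and is nontrivial; in
particular every term of the lower central series of `G` is nontrivial. -/
theorem CGroup_lowerCentralSeries_nontrivial {p : ℕ} (hp : p.Prime) {G : Type*} [Group G]
    [TopologicalSpace G] [IsTopologicalGroup G] [CompactSpace G] [T2Space G]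
    [TotallyDisconnectedSpace G] [Infinite G]
    (D : CGroupData p G) :
    (∀ k : ℕ, 2 ≤ k →
      D.gen (D.idx (k + 1)) ∈ (⊤ : Subgroup G).lowerCentralSeries (k - 1) ∧
      D.gen (D.idx (k + 1)) ≠ 1) ∧
    (∀ k : ℕ, (⊤ : Subgroup G).lowerCentralSeries k ≠ ⊥) := by
  have hne : ∀ i : ℕ, 1 ≤ i → D.gen i ≠ 1 := by
    intro i hi h
    exact D.gen_not_mem i hi (h ▸ (D.chain i).one_mem)
  have hmem : ∀ m : ℕ, D.gen (D.idx (m + 3)) ∈ (⊤ : Subgroup G).lowerCentralSeries (m + 1) := by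
    intro m
    induction m with
    | zero =>
      rw [D.tower₃]
      have : (D.gen (D.idx 1))⁻¹ * (D.gen (D.idx 2))⁻¹ * D.gen (D.idx 1) * D.gen (D.idx 2)
          = ⁅(D.gen (D.idx 1))⁻¹, (D.gen (D.idx 2))⁻¹⁆ := by
        simp [commutatorElement_def, mul_assoc]
      rw [this, show (⊤ : Subgroup G).lowerCentralSeries (0 + 1) = ⁅(⊤ : Subgroup G).lowerCentralSeries 0, ⊤⁆ from
        rfl]
      exact Subgroup.commutator_mem_commutator (by simp [Subgroup.lowerCentralSeries_zero])
        (Subgroup.mem_top _)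
    | succ n ih =>
      have ht := D.tower (n + 3) (by omega)
      have h1 : n + 3 - 1 = n + 2 := by omega
      rw [h1] at ht
      have : D.gen (D.idx (n + 3 + 1))
          = ⁅(D.gen (D.idx (n + 3)))⁻¹, (D.gen (D.idx (n + 2)))⁻¹⁆ := by
        rw [ht]; simp [commutatorElement_def, mul_assoc]
      rw [show n + 1 + 3 = n + 3 + 1 by omega, this,
        show (⊤ : Subgroup G).lowerCentralSeries (n + 1 + 1) = ⁅(⊤ : Subgroup G).lowerCentralSeries (n + 1), ⊤⁆ from
          rfl]
      exact Subgroup.commutator_mem_commutator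
        (((⊤ : Subgroup G).lowerCentralSeries (n + 1)).inv_mem ih) (Subgroup.mem_top _)
  have main : ∀ k : ℕ, 2 ≤ k →
      D.gen (D.idx (k + 1)) ∈ (⊤ : Subgroup G).lowerCentralSeries (k - 1) ∧ D.gen (D.idx (k + 1)) ≠ 1 := by
    intro k hk
    obtain ⟨m, rfl⟩ : ∃ m, k = m + 2 := ⟨k - 2, by omega⟩
    refine ⟨?_, hne _ (D.idx_pos _ (by omega))⟩
    have := hmem m
    simpa [show m + 2 - 1 = m + 1 by omega, show m + 2 + 1 = m + 3 by omega] using this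
  refine ⟨main, fun k hbot => ?_⟩
  cases k with
  | zero =>
    rw [Subgroup.lowerCentralSeries_zero] at hbot
    exact Infinite.instNontrivial G |>.exists_pair_ne.elim fun a ⟨b, hab⟩ => hab
      (by have : a ∈ (⊥ : Subgroup G) := hbot ▸ Subgroup.mem_top a
          have hb : b ∈ (⊥ : Subgroup G) := hbot ▸ Subgroup.mem_top b
          rw [Subgroup.mem_bot] at this hb; rw [this, hb])
  | succ n =>
    obtain ⟨hm, hne'⟩ := main (n + 2) (by omega)
    rw [show n + 2 - 1 = n + 1 by omega] at hm
    rw [hbot, Subgroup.mem_bot] at hm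
    exact hne' hm
end
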